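/- Let Λ be a finite subgroup of (ℝ/ℤ)^{d+1} with a unique element x of maximal height 2k, where ht(y) = k for all y ∈ Λ \ {0, x} and k ≥ 2. If Λ is cyclic, then x (equivalently −x) generates Λ, and the order m of Λ satisfies φ(m) ≤ 2, i.e., m ∈ {2, 3, 4, 6}; since m ≥ 3 by assumption m ∈ {3, 4, 6}. -/

import Mathlib

noncomputable section

/-- Fractional-part addition on `[0,1)`-vectors, modelling the group `(ℝ/ℤ)^n`. -/
def fadd {n : ℕ} (x y : Fin n → ℝ) : Fin n → ℝ := fun i => Int.fract (x i + y i)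

/-- Inverse in `(ℝ/ℤ)^n` on `[0,1)`-representatives. -/
def fneg {n : ℕ} (x : Fin n → ℝ) : Fin n → ℝ := fun i => Int.fract (-(x i))

/-- `j`-fold sum in `(ℝ/ℤ)^n` on `[0,1)`-representatives. -/
def fsmul {n : ℕ} (j : ℤ) (x : Fin n → ℝ) : Fin n → ℝ := fun i => Int.fract ((j : ℝ) * x i)

/-- The height `ht x = ∑ i, x i` of a `[0,1)`-vector. -/
def ht {n : ℕ} (x : Fin n → ℝ) : ℝ := ∑ i, x i

/-- The support `supp x = {i : x i ≠ 0}`. -/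
def supp {n : ℕ} (x : Fin n → ℝ) : Set (Fin n) := {i | x i ≠ 0}

/-- `S ⊆ [0,1)^n` is a subgroup of `(ℝ/ℤ)^n` (in `[0,1)`-coordinates). -/
def IsSubgroupSet {n : ℕ} (S : Set (Fin n → ℝ)) : Prop :=
  (∀ x ∈ S, ∀ i, x i ∈ Set.Ico (0 : ℝ) 1) ∧ 0 ∈ S ∧
    (∀ x ∈ S, ∀ y ∈ S, fadd x y ∈ S) ∧ ∀ x ∈ S, fneg x ∈ S

/-- The subgroup of `(ℝ/ℤ)^n` generated by a set of `[0,1)`-vectors. -/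
def genSet {n : ℕ} (gs : Set (Fin n → ℝ)) : Set (Fin n → ℝ) :=
  ⋂₀ {S | IsSubgroupSet S ∧ gs ⊆ S}

lemma fract_add_fract (a b : ℝ) : Int.fract (Int.fract a + Int.fract b) = Int.fract (a + b) := by
  have h : Int.fract a + Int.fract b = a + b - ((⌊a⌋ + ⌊b⌋ : ℤ) : ℝ) := by
    rw [← Int.self_sub_floor, ← Int.self_sub_floor]; push_cast; ring
  rw [h, Int.fract_sub_intCast]

lemma fract_int_mul_fract (c : ℤ) (a : ℝ) :
    Int.fract ((c : ℝ) * Int.fract a) = Int.fract (c * a) := by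
  have h : (c : ℝ) * Int.fract a = c * a - ((c * ⌊a⌋ : ℤ) : ℝ) := by
    rw [← Int.self_sub_floor]; push_cast; ring
  rw [h, Int.fract_sub_intCast]

lemma fract_neg_fract (a : ℝ) : Int.fract (-(Int.fract a)) = Int.fract (-a) := by
  have h : -(Int.fract a) = -a - ((-⌊a⌋ : ℤ) : ℝ) := by rw [← Int.self_sub_floor]; push_cast; ring
  rw [h, Int.fract_sub_intCast]

variable {n : ℕ}

lemma fadd_fsmul (a b : ℤ) (g : Fin n → ℝ) :
    fadd (fsmul a g) (fsmul b g) = fsmul (a + b) g := by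
  funext i
  simp only [fadd, fsmul]
  rw [fract_add_fract]
  push_cast; ring_nf

lemma fneg_fsmul (a : ℤ) (g : Fin n → ℝ) : fneg (fsmul a g) = fsmul (-a) g := by
  funext i
  simp only [fneg, fsmul]
  rw [fract_neg_fract]
  push_cast; ring_nf

lemma fsmul_fsmul (a b : ℤ) (g : Fin n → ℝ) : fsmul a (fsmul b g) = fsmul (a * b) g := by
  funext i
  simp only [fsmul]
  rw [fract_int_mul_fract]
  push_cast; ring_nf

lemma fsmul_zero_int (g : Fin n → ℝ) : fsmul 0 g = 0 := by
  funext i; simp [fsmul]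

lemma fsmul_one (g : Fin n → ℝ) (hg : ∀ i, g i ∈ Set.Ico (0:ℝ) 1) : fsmul 1 g = g := by
  funext i; simpa [fsmul] using Int.fract_eq_self.2 ⟨(hg i).1, (hg i).2⟩

lemma fsmul_zero_vec (a : ℤ) : fsmul a (0 : Fin n → ℝ) = 0 := by
  funext i; simp [fsmul]

lemma fneg_zero : fneg (0 : Fin n → ℝ) = 0 := by funext i; simp [fneg]

lemma fneg_fneg (g : Fin n → ℝ) (hg : ∀ i, g i ∈ Set.Ico (0:ℝ) 1) : fneg (fneg g) = g := by
  funext i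
  simp only [fneg]
  rw [fract_neg_fract, neg_neg]
  exact Int.fract_eq_self.2 ⟨(hg i).1, (hg i).2⟩

lemma fadd_zero' (a : ℤ) (g : Fin n → ℝ) : fadd (fsmul a g) 0 = fsmul a g := by
  funext i; simp [fadd, fsmul, Int.fract_fract]


section Aux
variable {n : ℕ} {S : Set (Fin n → ℝ)} {g : Fin n → ℝ}

lemma mem_fsmul (hS : IsSubgroupSet S) (hg : g ∈ S) : ∀ j : ℤ, fsmul j g ∈ S := by
  obtain ⟨hIco, h0, hadd, hneg⟩ := hS
  have key : ∀ a : ℤ, fadd (fsmul a g) g = fsmul (a + 1) g := fun a => by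
    have h := fadd_fsmul a 1 g
    rwa [fsmul_one g (hIco g hg)] at h
  intro j
  induction j using Int.induction_on with
  | zero => rw [fsmul_zero_int]; exact h0
  | succ i ih => have := hadd _ ih _ hg; rwa [key] at this
  | pred i ih =>
      have := hneg _ (hadd _ (hneg _ ih) _ hg)
      rw [fneg_fsmul, key, fneg_fsmul] at this
      convert this using 2
      ring

lemma sub_period (a b : ℤ) (h : fsmul a g = fsmul b g) : fsmul (a - b) g = 0 := by
  have h1 : fadd (fsmul a g) (fsmul (-b) g) = fsmul (a - b) g := by
    rw [fadd_fsmul]; ring_nf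
  have h2 : fadd (fsmul b g) (fsmul (-b) g) = fsmul 0 g := by rw [fadd_fsmul]; ring_nf
  rw [← h1, h, h2, fsmul_zero_int]

lemma exists_pos_period (hS : IsSubgroupSet S) (hfin : S.Finite) (hg : g ∈ S) :
    ∃ c : ℕ, 0 < c ∧ fsmul (c : ℤ) g = 0 := by
  have : Finite S := hfin.to_subtype
  obtain ⟨a, b, hab, he⟩ := Finite.exists_ne_map_eq_of_infinite
    (fun j : ℤ => (⟨fsmul j g, mem_fsmul hS hg j⟩ : S))
  have he' : fsmul a g = fsmul b g := congrArg Subtype.val he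
  rcases lt_or_gt_of_ne hab with h | h
  · exact ⟨(b - a).toNat, by omega, by
      rw [Int.toNat_of_nonneg (by omega)]; exact sub_period b a he'.symm⟩
  · exact ⟨(a - b).toNat, by omega, by
      rw [Int.toNat_of_nonneg (by omega)]; exact sub_period a b he'⟩


-- divisibility characterization given a minimal period m'
lemma period_dvd (m' : ℕ) (hm0 : 0 < m') (hper : fsmul (m' : ℤ) g = 0)
    (hmin : ∀ c : ℕ, 0 < c → c < m' → fsmul (c : ℤ) g ≠ 0) (j : ℤ) :
    fsmul j g = 0 ↔ (m' : ℤ) ∣ j := by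
  constructor
  · intro hj
    have hr0 : (0:ℤ) ≤ j % m' := Int.emod_nonneg j (by exact_mod_cast hm0.ne')
    have hrlt : j % m' < m' := Int.emod_lt_of_pos j (by exact_mod_cast hm0)
    have hmul : fsmul ((m':ℤ) * (j / m')) g = 0 := by
      rw [mul_comm, ← fsmul_fsmul, hper, fsmul_zero_vec]
    have hrj : fsmul (j % m') g = 0 := by
      have : j % (m':ℤ) = j - m' * (j / m') := Int.emod_def j m'
      rw [this]
      have := sub_period j (m' * (j / m')) (by rw [hj, hmul])
      exact this
    by_contra hnd
    have h1 : j % m' ≠ 0 := fun h => hnd (Int.dvd_of_emod_eq_zero h)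
    have h2 := hmin (j % m').toNat (by omega) (by omega)
    rw [Int.toNat_of_nonneg hr0] at h2
    exact h2 hrj
  · rintro ⟨q, rfl⟩
    rw [mul_comm, ← fsmul_fsmul, hper, fsmul_zero_vec]

lemma fsmul_eq_iff (m' : ℕ) (hm0 : 0 < m') (hper : fsmul (m' : ℤ) g = 0)
    (hmin : ∀ c : ℕ, 0 < c → c < m' → fsmul (c : ℤ) g ≠ 0) (a b : ℤ) :
    fsmul a g = fsmul b g ↔ (m' : ℤ) ∣ a - b := by
  constructor
  · intro h
    exact (period_dvd m' hm0 hper hmin _).1 (sub_period a b h)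
  · intro h
    have h0 : fsmul (a - b) g = 0 := (period_dvd m' hm0 hper hmin _).2 h
    have : fadd (fsmul b g) (fsmul (a - b) g) = fsmul a g := by rw [fadd_fsmul]; ring_nf
    rw [h0] at this
    rw [← this]
    funext i
    simp [fadd, fsmul, Int.fract_fract]

lemma ncard_eq (hS : IsSubgroupSet S) (hfin : S.Finite)
    (hg : g ∈ S) (hsurj : ∀ y ∈ S, ∃ j : ℤ, y = fsmul j g)
    (m' : ℕ) (hm0 : 0 < m') (hper : fsmul (m' : ℤ) g = 0)
    (hmin : ∀ c : ℕ, 0 < c → c < m' → fsmul (c : ℤ) g ≠ 0) :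
    S.ncard = m' := by
  classical
  have heq : hfin.toFinset = (Finset.range m').image (fun j : ℕ => fsmul (j : ℤ) g) := by
    ext y
    simp only [Set.Finite.mem_toFinset, Finset.mem_image, Finset.mem_range]
    constructor
    · intro hy
      obtain ⟨j, rfl⟩ := hsurj y hy
      refine ⟨(j % m').toNat, ?_, ?_⟩
      · have := Int.emod_lt_of_pos j (show (0:ℤ) < m' by exact_mod_cast hm0); omega
      · rw [Int.toNat_of_nonneg (Int.emod_nonneg j (by exact_mod_cast hm0.ne'))]
        rw [fsmul_eq_iff m' hm0 hper hmin]
        have h3 : j % (m':ℤ) - j = -((m':ℤ) * (j / m')) := by rw [Int.emod_def]; ring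
        rw [h3]
        exact dvd_neg.mpr (dvd_mul_right _ _)
    · rintro ⟨j, hj, rfl⟩
      exact mem_fsmul hS hg j
  rw [Set.ncard_eq_toFinset_card _ hfin, heq,
    Finset.card_image_of_injOn, Finset.card_range]
  intro a ha b hb hab
  simp only [Finset.coe_range, Set.mem_Iio] at ha hb
  have := (fsmul_eq_iff m' hm0 hper hmin _ _).1 hab
  have := Int.eq_zero_of_abs_lt_dvd this (by
    rw [abs_lt]; constructor <;> [push_cast; push_cast] <;> omega)
  omega

lemma supp_fsmul_coprime (m' : ℕ) (hm0 : 0 < m') (hper : fsmul (m' : ℤ) g = 0)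
    (hgIco : ∀ i, g i ∈ Set.Ico (0:ℝ) 1) (j : ℤ) (hco : IsCoprime j (m' : ℤ)) (i : Fin n) :
    fsmul j g i = 0 ↔ g i = 0 := by
  constructor
  · intro hj
    have hpi : Int.fract ((m' : ℝ) * g i) = 0 := congrFun hper i
    have ha : ((⌊(m' : ℝ) * g i⌋ : ℤ) : ℝ) = (m' : ℝ) * g i := by
      have := Int.self_sub_floor ((m' : ℝ) * g i)
      rw [hpi] at this; linarith
    set a : ℤ := ⌊(m' : ℝ) * g i⌋ with hadef
    have ha0 : 0 ≤ a := by
      have h1 : (0:ℝ) ≤ (m' : ℝ) * g i :=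
        mul_nonneg (by positivity) (hgIco i).1
      exact_mod_cast ha ▸ h1
    have halt : a < m' := by
      have h1 : (m' : ℝ) * g i < m' := by
        have := (hgIco i).2
        have hmp : (0:ℝ) < m' := by exact_mod_cast hm0
        nlinarith
      exact_mod_cast ha ▸ h1
    have hb : ((⌊(j : ℝ) * g i⌋ : ℤ) : ℝ) = (j : ℝ) * g i := by
      have h2 : Int.fract ((j : ℝ) * g i) = 0 := hj
      have := Int.self_sub_floor ((j : ℝ) * g i)
      rw [h2] at this; linarith
    set b : ℤ := ⌊(j : ℝ) * g i⌋ with hbdef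
    have hkey : (m' : ℤ) * b = j * a := by
      have : ((m' : ℤ) * b : ℝ) = ((j * a : ℤ) : ℝ) := by push_cast [hb, ha]; ring
      exact_mod_cast this
    have hdvd : (m' : ℤ) ∣ j * a := ⟨b, hkey.symm⟩
    have : (m' : ℤ) ∣ a := hco.symm.dvd_of_dvd_mul_left hdvd
    have ha00 : a = 0 := Int.eq_zero_of_abs_lt_dvd this (by rw [abs_of_nonneg ha0]; exact halt)
    have : (m' : ℝ) * g i = 0 := by rw [← ha, ha00]; simp
    have hmp : (0:ℝ) < m' := by exact_mod_cast hm0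
    exact by nlinarith [this, (hgIco i).1]
  · intro h
    simp [fsmul, h]

lemma ht_pair (y : Fin n → ℝ) (hy : ∀ i, y i ∈ Set.Ico (0:ℝ) 1) :
    ht y + ht (fneg y) = ∑ i, (if y i = 0 then (0:ℝ) else 1) := by
  rw [ht, ht, ← Finset.sum_add_distrib]
  refine Finset.sum_congr rfl fun i _ => ?_
  by_cases h : y i = 0
  · simp [fneg, h]
  · have hself : Int.fract (y i) = y i := Int.fract_eq_self.2 ⟨(hy i).1, (hy i).2⟩
    have : Int.fract (-(y i)) = 1 - y i := by
      rw [Int.fract_neg (by rw [hself]; exact h), hself]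
    simp only [fneg, this, if_neg h]
    ring

lemma ht_nonneg (y : Fin n → ℝ) (hy : ∀ i, y i ∈ Set.Ico (0:ℝ) 1) : 0 ≤ ht y :=
  Finset.sum_nonneg fun i _ => (hy i).1

lemma ht_eq_zero_iff (y : Fin n → ℝ) (hy : ∀ i, y i ∈ Set.Ico (0:ℝ) 1) :
    ht y = 0 ↔ y = 0 := by
  constructor
  · intro h
    funext i
    have := (Finset.sum_eq_zero_iff_of_nonneg (fun i _ => (hy i).1)).1 h i (Finset.mem_univ i)
    simpa using this
  · intro h; rw [h, ht]; simp

end Aux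

theorem stmt16 (d k : ℕ) (hk : 2 ≤ k) (S : Set (Fin (d+1) → ℝ)) (hS : IsSubgroupSet S)
    (hfin : S.Finite) (hm : 3 ≤ S.ncard)
    (x : Fin (d+1) → ℝ) (hx : x ∈ S) (hhtx : ht x = 2 * k)
    (huniq : ∀ y ∈ S, ht y = (2 * k : ℝ) → y = x)
    (hall : ∀ y ∈ S, y ≠ (0 : Fin (d+1) → ℝ) → y ≠ x → ht y = (k : ℝ))
    (hcyc : ∃ g ∈ S, ∀ y ∈ S, ∃ j : ℤ, y = fsmul j g) :
    (∀ y ∈ S, ∃ j : ℤ, y = fsmul j x) ∧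
      Nat.totient S.ncard ≤ 2 ∧ (S.ncard = 3 ∨ S.ncard = 4 ∨ S.ncard = 6) := by
  classical
  obtain ⟨g, hgS, hsurj⟩ := hcyc
  have hgIco : ∀ i, g i ∈ Set.Ico (0:ℝ) 1 := hS.1 g hgS
  have hxIco : ∀ i, x i ∈ Set.Ico (0:ℝ) 1 := hS.1 x hx
  -- minimal period
  have hex : ∃ c : ℕ, 0 < c ∧ fsmul (c : ℤ) g = 0 := exists_pos_period hS hfin hgS
  obtain ⟨m', hm0, hper, hmin⟩ : ∃ m' : ℕ, 0 < m' ∧ fsmul (m' : ℤ) g = 0 ∧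
      ∀ c : ℕ, 0 < c → c < m' → fsmul (c : ℤ) g ≠ 0 :=
    ⟨Nat.find hex, (Nat.find_spec hex).1, (Nat.find_spec hex).2,
      fun c h1 h2 h3 => Nat.find_min hex h2 ⟨h1, h3⟩⟩
  have hcard : S.ncard = m' := ncard_eq hS hfin hgS hsurj m' hm0 hper hmin
  have hm3 : 3 ≤ m' := hcard ▸ hm
  have heqiff : ∀ a b : ℤ, fsmul a g = fsmul b g ↔ (m' : ℤ) ∣ a - b :=
    fsmul_eq_iff m' hm0 hper hmin
  have hk0 : (0:ℝ) < k := by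
    have : 0 < k := by omega
    exact_mod_cast this
  have hht0 : ht (0 : Fin (d+1) → ℝ) = 0 := by simp [ht]
  have hx0 : x ≠ 0 := by
    intro h; rw [h, hht0] at hhtx; nlinarith
  -- Step 1: x = g or x = fneg g
  have heg : x = g ∨ x = fneg g := by
    by_contra hne
    push_neg at hne
    obtain ⟨hne1, hne2⟩ := hne
    have hgne0 : g ≠ 0 := by
      intro h
      exact hmin 1 one_pos (by omega) (by rw [h, fsmul_zero_vec])
    have hfnegg_mem : fneg g ∈ S := hS.2.2.2 g hgS
    have hfnegg_ne0 : fneg g ≠ 0 := by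
      intro h
      have := fneg_fneg g hgIco
      rw [h, fneg_zero] at this
      exact hgne0 this.symm
    have hhtg : ht g = k := hall g hgS hgne0 (fun h => hne1 h.symm)
    have hhtng : ht (fneg g) = k := hall _ hfnegg_mem hfnegg_ne0 (fun h => hne2 h.symm)
    obtain ⟨j, hj⟩ := hsurj x hx
    have hsupp : ∀ i, g i = 0 → x i = 0 := by
      intro i h
      rw [hj]; simp [fsmul, h]
    have hpairg := ht_pair g hgIco
    have hpairx := ht_pair x hxIco
    have hle : (∑ i, if x i = 0 then (0:ℝ) else 1) ≤ ∑ i, if g i = 0 then (0:ℝ) else 1 := by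
      refine Finset.sum_le_sum fun i _ => ?_
      by_cases h : x i = 0
      · rw [if_pos h]; split <;> norm_num
      · rw [if_neg h, if_neg (fun hg0 => h (hsupp i hg0))]
    have hfx_mem : fneg x ∈ S := hS.2.2.2 x hx
    by_cases hfx : fneg x = x
    · rw [hfx, hhtx] at hpairx
      rw [hhtg, hhtng] at hpairg
      nlinarith
    · have hfx_ne0 : fneg x ≠ 0 := by
        intro h
        have := fneg_fneg x hxIco
        rw [h, fneg_zero] at this
        exact hx0 this.symm
      have : ht (fneg x) = k := hall _ hfx_mem hfx_ne0 hfx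
      rw [hhtx, this] at hpairx
      rw [hhtg, hhtng] at hpairg
      nlinarith
  -- the sign e
  obtain ⟨e, he1, hxe, hge⟩ : ∃ e : ℤ, (e = 1 ∨ e = -1) ∧ x = fsmul e g ∧ g = fsmul e x := by
    rcases heg with h | h
    · exact ⟨1, Or.inl rfl, by rw [fsmul_one g hgIco]; exact h,
        by rw [fsmul_one x hxIco]; exact h.symm⟩
    · refine ⟨-1, Or.inr rfl, ?_, ?_⟩
      · have h1 := fneg_fsmul 1 g
        rw [fsmul_one g hgIco] at h1
        rw [← h1]; exact h
      · have h1 := fneg_fsmul 1 x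
        rw [fsmul_one x hxIco] at h1
        rw [← h1, h, fneg_fneg g hgIco]
  have hee : e * e = 1 := by rcases he1 with rfl | rfl <;> norm_num
  have hecop : IsCoprime e (m' : ℤ) := by
    rcases he1 with rfl | rfl
    · exact isCoprime_one_left
    · exact isCoprime_one_left.neg_left
  have hxsmul : ∀ a : ℤ, fsmul a x = fsmul (a * e) g := fun a => by
    rw [hxe, fsmul_fsmul]
  have hxeq : ∀ a b : ℤ, fsmul a x = fsmul b x ↔ (m' : ℤ) ∣ a - b := by
    intro a b
    rw [hxsmul, hxsmul, heqiff]
    constructor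
    · intro h
      have h2 := h.mul_right e
      have h3 : (a * e - b * e) * e = a - b := by
        have : (a * e - b * e) * e = (a - b) * (e * e) := by ring
        rw [this, hee, mul_one]
      rwa [h3] at h2
    · intro h
      have h3 : a * e - b * e = (a - b) * e := by ring
      rw [h3]
      exact h.mul_right e
  -- part 1
  have part1 : ∀ y ∈ S, ∃ j : ℤ, y = fsmul j x := by
    intro y hy
    obtain ⟨j, hjy⟩ := hsurj y hy
    exact ⟨j * e, by rw [← fsmul_fsmul, ← hge]; exact hjy⟩
  -- support of x equals support of g
  have hsuppx : ∀ i, x i = 0 ↔ g i = 0 := by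
    intro i
    rw [hxe]
    exact supp_fsmul_coprime m' hm0 hper hgIco e hecop i
  -- fneg x facts
  have hfnegx_eq : fneg x = fsmul (-1) x := by
    have h1 := fneg_fsmul 1 x
    rw [fsmul_one x hxIco] at h1
    exact h1
  have hfx_ne : fneg x ≠ x := by
    intro h
    rw [hfnegx_eq] at h
    nth_rewrite 2 [← fsmul_one x hxIco] at h
    have := (hxeq (-1) 1).mp h
    have h2 := Int.eq_zero_of_abs_lt_dvd this (by
      rw [show (-1 : ℤ) - 1 = -2 by ring, abs_neg]
      norm_num
      exact_mod_cast by omega)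
    omega
  have hfx_mem : fneg x ∈ S := hS.2.2.2 x hx
  have hfx_ne0 : fneg x ≠ 0 := by
    intro h
    have := fneg_fneg x hxIco
    rw [h, fneg_zero] at this
    exact hx0 this.symm
  have hhtfx : ht (fneg x) = k := hall _ hfx_mem hfx_ne0 hfx_ne
  have hpairx := ht_pair x hxIco
  rw [hhtx, hhtfx] at hpairx
  -- units land in {x, fneg x}
  have hunits : ∀ u : ℤ, IsCoprime u (m' : ℤ) → (m' : ℤ) ∣ u - 1 ∨ (m' : ℤ) ∣ u + 1 := by
    intro u hu
    have hcoe : IsCoprime (u * e) (m' : ℤ) := hu.mul_left hecop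
    have hz : fsmul u x = fsmul (u * e) g := hxsmul u
    have hzS : fsmul u x ∈ S := hz ▸ mem_fsmul hS hgS _
    have hzIco : ∀ i, fsmul u x i ∈ Set.Ico (0:ℝ) 1 :=
      fun i => ⟨Int.fract_nonneg _, Int.fract_lt_one _⟩
    have hsuppz : ∀ i, (fsmul u x i = 0 ↔ x i = 0) := by
      intro i
      rw [congrFun hz i]
      rw [supp_fsmul_coprime m' hm0 hper hgIco (u * e) hcoe i]
      exact (hsuppx i).symm
    by_contra hcon
    push_neg at hcon
    have hz_ne_x : fsmul u x ≠ x := by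
      intro h
      nth_rewrite 2 [← fsmul_one x hxIco] at h
      exact hcon.1 ((hxeq u 1).mp h)
    have hz_ne_fx : fsmul u x ≠ fneg x := by
      intro h
      rw [hfnegx_eq] at h
      have := (hxeq u (-1)).mp h
      exact hcon.2 (by rwa [show u - (-1) = u + 1 by ring] at this)
    have hz_ne0 : fsmul u x ≠ 0 := by
      intro h
      have h1 : fsmul u x = fsmul 0 x := by rw [h, fsmul_zero_int]
      have h2 := (hxeq u 0).mp h1
      rw [sub_zero] at h2
      obtain ⟨a, b, hab⟩ := hu
      have : (m' : ℤ) ∣ 1 := by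
        rw [← hab]
        exact dvd_add (Dvd.dvd.mul_left h2 a) (dvd_mul_left _ _)
      have := Int.le_of_dvd one_pos this
      omega
    have hhz : ht (fsmul u x) = k := hall _ hzS hz_ne0 hz_ne_x
    have hfz_eq : fneg (fsmul u x) = fsmul (-u) x := fneg_fsmul u x
    have hfzS : fneg (fsmul u x) ∈ S := hS.2.2.2 _ hzS
    have hfz_ne0 : fneg (fsmul u x) ≠ 0 := by
      intro h
      have := fneg_fneg (fsmul u x) hzIco
      rw [h, fneg_zero] at this
      exact hz_ne0 this.symm
    have hfz_ne_x : fneg (fsmul u x) ≠ x := by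
      intro h
      have := congrArg fneg h
      rw [fneg_fneg (fsmul u x) hzIco] at this
      exact hz_ne_fx this
    have hhfz : ht (fneg (fsmul u x)) = k := hall _ hfzS hfz_ne0 hfz_ne_x
    have hpairz := ht_pair (fsmul u x) hzIco
    rw [hhz, hhfz] at hpairz
    have hsums : (∑ i, if fsmul u x i = 0 then (0:ℝ) else 1)
        = ∑ i, if x i = 0 then (0:ℝ) else 1 := by
      refine Finset.sum_congr rfl fun i _ => ?_
      by_cases h : x i = 0
      · rw [if_pos h, if_pos ((hsuppz i).mpr h)]
      · rw [if_neg h, if_neg (fun hh => h ((hsuppz i).mp hh))]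
    rw [hsums] at hpairz
    nlinarith
  -- totient bound
  have htot : Nat.totient m' ≤ 2 := by
    rw [Nat.totient_eq_card_coprime]
    have hb : ({x, fneg x} : Finset (Fin (d+1) → ℝ)).card ≤ 2 := by
      apply le_trans (Finset.card_insert_le _ _)
      simp
    refine le_trans (Finset.card_le_card_of_injOn (fun j : ℕ => fsmul (j : ℤ) x) ?_ ?_) hb
    · intro j hj
      simp only [Finset.mem_coe, Finset.mem_filter, Finset.mem_range] at hj
      have hco : IsCoprime ((j : ℕ) : ℤ) (m' : ℤ) :=
        Nat.isCoprime_iff_coprime.2 hj.2.symm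
      show fsmul (j : ℤ) x ∈ ({x, fneg x} : Finset (Fin (d+1) → ℝ))
      rcases hunits j hco with h | h
      · have : fsmul (j : ℤ) x = fsmul 1 x := (hxeq _ _).mpr (by rwa [])
        rw [this, fsmul_one x hxIco]
        simp
      · have : fsmul (j : ℤ) x = fsmul (-1) x := (hxeq _ _).mpr (by
          rwa [show (j : ℤ) - (-1) = j + 1 by ring])
        rw [this, ← hfnegx_eq]
        simp
    · intro a ha b hb' hab
      simp only [Finset.coe_filter, Set.mem_setOf_eq, Finset.mem_range] at ha hb'
      have := (hxeq _ _).mp hab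
      have h2 := Int.eq_zero_of_abs_lt_dvd this (by
        rw [abs_lt]
        constructor <;> push_cast <;> omega)
      omega
  -- final classification
  have hclass : m' = 3 ∨ m' = 4 ∨ m' = 6 := by
    by_contra hcl
    push_neg at hcl
    obtain ⟨hc3, hc4, hc6⟩ := hcl
    -- find a unit u with 2 ≤ u and u + 2 ≤ m'
    obtain ⟨u, hu1, hu2, hu3⟩ : ∃ u : ℕ, Nat.Coprime u m' ∧ 2 ≤ u ∧ u + 2 ≤ m' := by
      by_cases h2 : m' % 2 = 1
      · exact ⟨2, Nat.coprime_two_left.2 (Nat.odd_iff.2 h2), le_refl 2, by omega⟩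
      · by_cases h3 : m' % 3 = 0
        · -- 6 ∣ m', m' ≥ 12
          have h12 : 12 ≤ m' := by omega
          by_cases h4 : m' % 4 = 0
          · refine ⟨m' / 2 - 1, ?_, by omega, by omega⟩
            have huodd : (m' / 2 - 1) % 2 = 1 := by omega
            have h2u : 2 * (m' / 2 - 1) = m' - 2 := by omega
            have hd1 : Nat.gcd (m' / 2 - 1) m' ∣ m' / 2 - 1 := Nat.gcd_dvd_left _ _
            have hd2 : Nat.gcd (m' / 2 - 1) m' ∣ m' := Nat.gcd_dvd_right _ _
            have hd3 : Nat.gcd (m' / 2 - 1) m' ∣ 2 := by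
              have h6 : Nat.gcd (m' / 2 - 1) m' ∣ 2 * (m' / 2 - 1) := hd1.mul_left 2
              have h5 := Nat.dvd_sub hd2 h6
              rwa [h2u, show m' - (m' - 2) = 2 by omega] at h5
            have hdodd : ¬ 2 ∣ Nat.gcd (m' / 2 - 1) m' := by
              intro h
              have := h.trans hd1
              omega
            have hdle : Nat.gcd (m' / 2 - 1) m' ≤ 2 := Nat.le_of_dvd (by norm_num) hd3
            have hdle : Nat.gcd (m' / 2 - 1) m' ≤ 2 := Nat.le_of_dvd (by norm_num) hd3
            omega
          · refine ⟨m' / 2 - 2, ?_, by omega, by omega⟩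
            have h18 : 18 ≤ m' := by omega
            have huodd : (m' / 2 - 2) % 2 = 1 := by omega
            have h2u : 2 * (m' / 2 - 2) = m' - 4 := by omega
            have hd1 : Nat.gcd (m' / 2 - 2) m' ∣ m' / 2 - 2 := Nat.gcd_dvd_left _ _
            have hd2 : Nat.gcd (m' / 2 - 2) m' ∣ m' := Nat.gcd_dvd_right _ _
            have hd4 : Nat.gcd (m' / 2 - 2) m' ∣ 4 := by
              have h6 : Nat.gcd (m' / 2 - 2) m' ∣ 2 * (m' / 2 - 2) := hd1.mul_left 2
              have h5 := Nat.dvd_sub hd2 h6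
              rwa [h2u, show m' - (m' - 4) = 4 by omega] at h5
            have hdodd : ¬ 2 ∣ Nat.gcd (m' / 2 - 2) m' := by
              intro h
              have := h.trans hd1
              omega
            have hcop2 : Nat.Coprime (Nat.gcd (m' / 2 - 2) m') 2 :=
              (Nat.Prime.coprime_iff_not_dvd Nat.prime_two).2 hdodd |>.symm
            have hd3 : Nat.gcd (m' / 2 - 2) m' ∣ 2 := by
              rw [show (4:ℕ) = 2 * 2 by norm_num] at hd4
              exact hcop2.dvd_of_dvd_mul_right hd4
            have hdle : Nat.gcd (m' / 2 - 2) m' ≤ 2 := Nat.le_of_dvd (by norm_num) hd3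
            omega
        · -- m' even, not divisible by 3, so m' ≥ 8
          have h8 : 8 ≤ m' := by omega
          exact ⟨3, (Nat.Prime.coprime_iff_not_dvd Nat.prime_three).2 (by omega), by omega, by omega⟩
    have hco : IsCoprime ((u : ℕ) : ℤ) (m' : ℤ) := Nat.isCoprime_iff_coprime.2 hu1
    rcases hunits u hco with h | h
    · have := Int.eq_zero_of_abs_lt_dvd h (by rw [abs_lt]; constructor <;> push_cast <;> omega)
      omega
    · have := Int.eq_zero_of_abs_lt_dvd h (by rw [abs_lt]; constructor <;> push_cast <;> omega)
      omega
  rw [hcard]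
  exact ⟨part1, htot, hclass⟩
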